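/- arXiv:1601.00527 — 4 statements merged into one kernel-verified Lean document; each statement's English description precedes it below -/
import Mathlib

section
/- Let Q ∈ ℝ^{n×n} be symmetric positive definite, U_m ∈ ℝ^{n×m} satisfy U_mᵀ Q U_m = I_m, and let ℙ = U_m(E_mᵀU_m)^{-1}E_mᵀ be the DEIM projection (with EᵀU invertible). Then for every f ∈ ℝⁿ, ‖f − ℙf‖_Q ≤ ‖ℙ‖_Q · ‖(I − U_m U_mᵀ Q) f‖_Q, where ‖(I − U_m U_mᵀ Q) f‖_Q is the best Q-norm approximation error of f from Ran(U_m) and ‖ℙ‖_Q denotes the operator norm of ℙ with respect to the Q-norm. -/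
open Matrix

/-- Q-weighted norm. -/
noncomputable def qnorm {n : ℕ} (Q : Matrix (Fin n) (Fin n) ℝ) (x : Fin n → ℝ) : ℝ :=
  Real.sqrt (x ⬝ᵥ Q *ᵥ x)

/-- Operator norm induced by the Q-weighted norm. -/
noncomputable def opNormQ {n : ℕ} (Q M : Matrix (Fin n) (Fin n) ℝ) : ℝ :=
  sSup {r : ℝ | ∃ x : Fin n → ℝ, x ≠ 0 ∧ r = qnorm Q (M *ᵥ x) / qnorm Q x}

namespace DeimAux
variable {n : ℕ}

lemma ipq_nonneg {Q : Matrix (Fin n) (Fin n) ℝ} (hQ : Q.PosDef) (x : Fin n → ℝ) :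
    0 ≤ x ⬝ᵥ Q *ᵥ x := by
  have := hQ.posSemidef.dotProduct_mulVec_nonneg x; simpa using this

lemma ipq_symm {Q : Matrix (Fin n) (Fin n) ℝ} (hQ : Qᵀ = Q) (x y : Fin n → ℝ) :
    x ⬝ᵥ Q *ᵥ y = y ⬝ᵥ Q *ᵥ x := by
  rw [Matrix.dotProduct_mulVec, ← Matrix.mulVec_transpose, hQ, dotProduct_comm]

lemma qnorm_nonneg (Q : Matrix (Fin n) (Fin n) ℝ) (x : Fin n → ℝ) : 0 ≤ qnorm Q x :=
  Real.sqrt_nonneg _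

lemma qnorm_sq {Q : Matrix (Fin n) (Fin n) ℝ} (hQ : Q.PosDef) (x : Fin n → ℝ) :
    qnorm Q x ^ 2 = x ⬝ᵥ Q *ᵥ x := by
  rw [qnorm, Real.sq_sqrt (ipq_nonneg hQ x)]

lemma qnorm_pos {Q : Matrix (Fin n) (Fin n) ℝ} (hQ : Q.PosDef) {x : Fin n → ℝ} (hx : x ≠ 0) :
    0 < qnorm Q x := by
  have h := hQ.dotProduct_mulVec_pos hx
  simp only [star_trivial] at h
  exact Real.sqrt_pos.mpr h

lemma qnorm_smul (Q : Matrix (Fin n) (Fin n) ℝ) (r : ℝ) (x : Fin n → ℝ) :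
    qnorm Q (r • x) = |r| * qnorm Q x := by
  rw [qnorm, qnorm, Matrix.mulVec_smul, dotProduct_smul, smul_dotProduct]
  simp only [smul_eq_mul, ← mul_assoc]
  rw [show r * r * (x ⬝ᵥ Q *ᵥ x) = r^2 * (x ⬝ᵥ Q *ᵥ x) by ring, Real.sqrt_mul (sq_nonneg r),
    Real.sqrt_sq_eq_abs]

lemma ipq_expand {Q : Matrix (Fin n) (Fin n) ℝ} (hQs : Qᵀ = Q) (x y : Fin n → ℝ) (t : ℝ) :
    (x + t • y) ⬝ᵥ Q *ᵥ (x + t • y)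
      = x ⬝ᵥ Q *ᵥ x + 2 * t * (x ⬝ᵥ Q *ᵥ y) + t^2 * (y ⬝ᵥ Q *ᵥ y) := by
  have h := ipq_symm hQs y x
  simp only [Matrix.mulVec_add, Matrix.mulVec_smul, dotProduct_add,
    add_dotProduct, dotProduct_smul, smul_dotProduct, smul_eq_mul, h]
  ring

lemma ipq_cs {Q : Matrix (Fin n) (Fin n) ℝ} (hQ : Q.PosDef) (x y : Fin n → ℝ) :
    (x ⬝ᵥ Q *ᵥ y)^2 ≤ (x ⬝ᵥ Q *ᵥ x) * (y ⬝ᵥ Q *ᵥ y) := by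
  have hQs : Qᵀ = Q := hQ.isHermitian
  have h : ∀ t : ℝ, 0 ≤ (y ⬝ᵥ Q *ᵥ y) * (t * t) + (2 * (x ⬝ᵥ Q *ᵥ y)) * t + (x ⬝ᵥ Q *ᵥ x) := by
    intro t
    have := ipq_nonneg hQ (x + t • y)
    rw [ipq_expand hQs x y t] at this
    nlinarith [this]
  have hd := discrim_le_zero h
  rw [discrim] at hd
  nlinarith [hd]

lemma dot_le_const_dot (M : Matrix (Fin n) (Fin n) ℝ) (x : Fin n → ℝ) :
    x ⬝ᵥ M *ᵥ x ≤ (∑ i, ∑ j, |M i j|) * (x ⬝ᵥ x) := by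
  have hxx : ∀ i j, |x i * x j| ≤ x ⬝ᵥ x := by
    intro i j
    have h1 : (x i * x j)^2 ≤ (x ⬝ᵥ x)^2 := by
      have hi : x i ^ 2 ≤ x ⬝ᵥ x := by
        rw [dotProduct]
        have := Finset.single_le_sum (f := fun k => x k * x k)
          (fun k _ => mul_self_nonneg _) (Finset.mem_univ i)
        nlinarith [this]
      have hj : x j ^ 2 ≤ x ⬝ᵥ x := by
        rw [dotProduct]
        have := Finset.single_le_sum (f := fun k => x k * x k)
          (fun k _ => mul_self_nonneg _) (Finset.mem_univ j)
        nlinarith [this]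
      nlinarith [sq_nonneg (x i), sq_nonneg (x j)]
    have h2 : 0 ≤ x ⬝ᵥ x := by
      rw [dotProduct]; exact Finset.sum_nonneg fun k _ => mul_self_nonneg _
    nlinarith [abs_nonneg (x i * x j), sq_abs (x i * x j)]
  calc x ⬝ᵥ M *ᵥ x = ∑ i, ∑ j, x i * (M i j * x j) := by
        simp [dotProduct, Matrix.mulVec, Finset.mul_sum]
    _ ≤ ∑ i, ∑ j, |M i j| * (x ⬝ᵥ x) := by
        apply Finset.sum_le_sum; intro i _
        apply Finset.sum_le_sum; intro j _
        calc x i * (M i j * x j) ≤ |x i * (M i j * x j)| := le_abs_self _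
          _ = |M i j| * |x i * x j| := by rw [abs_mul, abs_mul, abs_mul]; ring
          _ ≤ |M i j| * (x ⬝ᵥ x) := by
              exact mul_le_mul_of_nonneg_left (hxx i j) (abs_nonneg _)
    _ = (∑ i, ∑ j, |M i j|) * (x ⬝ᵥ x) := by rw [Finset.sum_mul]; congr 1; ext i; rw [Finset.sum_mul]

lemma mulVec_dot_le (M : Matrix (Fin n) (Fin n) ℝ) (x : Fin n → ℝ) :
    (M *ᵥ x) ⬝ᵥ (M *ᵥ x) ≤ (∑ i, ∑ j, (M i j)^2) * (x ⬝ᵥ x) := by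
  have : ∀ i, (M *ᵥ x) i * (M *ᵥ x) i ≤ (∑ j, (M i j)^2) * (x ⬝ᵥ x) := by
    intro i
    have := Finset.sum_mul_sq_le_sq_mul_sq Finset.univ (fun j => M i j) x
    simpa [Matrix.mulVec, dotProduct, ← sq] using this
  calc (M *ᵥ x) ⬝ᵥ (M *ᵥ x) = ∑ i, (M *ᵥ x) i * (M *ᵥ x) i := rfl
    _ ≤ ∑ i, (∑ j, (M i j)^2) * (x ⬝ᵥ x) := Finset.sum_le_sum fun i _ => this i
    _ = (∑ i, ∑ j, (M i j)^2) * (x ⬝ᵥ x) := by rw [Finset.sum_mul]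

lemma dot_le_ipq {Q : Matrix (Fin n) (Fin n) ℝ} (hQ : Q.PosDef) (x : Fin n → ℝ) :
    x ⬝ᵥ x ≤ (∑ i, ∑ j, |Q⁻¹ i j|) * (x ⬝ᵥ Q *ᵥ x) := by
  have hQs : Qᵀ = Q := hQ.isHermitian
  have hdet : IsUnit Q.det := isUnit_iff_ne_zero.mpr hQ.det_pos.ne'
  have CS := ipq_cs hQ x (Q⁻¹ *ᵥ x)
  have hx : Q *ᵥ (Q⁻¹ *ᵥ x) = x := by
    rw [Matrix.mulVec_mulVec, Matrix.mul_nonsing_inv _ hdet, Matrix.one_mulVec]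
  have h1 : x ⬝ᵥ Q *ᵥ (Q⁻¹ *ᵥ x) = x ⬝ᵥ x := by rw [hx]
  have h2 : (Q⁻¹ *ᵥ x) ⬝ᵥ Q *ᵥ (Q⁻¹ *ᵥ x) = x ⬝ᵥ Q⁻¹ *ᵥ x := by
    conv_lhs => rw [hx]
    rw [Matrix.dotProduct_mulVec, ← Matrix.mulVec_transpose, Matrix.transpose_nonsing_inv, hQs,
      dotProduct_comm]
  rw [h1, h2] at CS
  have h3 : x ⬝ᵥ Q⁻¹ *ᵥ x ≤ (∑ i, ∑ j, |Q⁻¹ i j|) * (x ⬝ᵥ x) := dot_le_const_dot _ x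
  have hxx : 0 ≤ x ⬝ᵥ x := Finset.sum_nonneg fun k _ => mul_self_nonneg _
  have hq0 : 0 ≤ x ⬝ᵥ Q *ᵥ x := ipq_nonneg hQ x
  rcases eq_or_lt_of_le hxx with h | h
  · have hC : 0 ≤ (∑ i, ∑ j, |Q⁻¹ i j|) := by positivity
    nlinarith
  · nlinarith [CS, h3, mul_le_mul_of_nonneg_left h3 hq0]

lemma exists_C {Q : Matrix (Fin n) (Fin n) ℝ} (hQ : Q.PosDef) (M : Matrix (Fin n) (Fin n) ℝ) :
    ∃ C : ℝ, 0 ≤ C ∧ ∀ x, qnorm Q (M *ᵥ x) ≤ C * qnorm Q x := by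
  set CQ := ∑ i, ∑ j, |Q i j| with hCQ
  set CM := ∑ i, ∑ j, (M i j)^2 with hCM
  set C' := ∑ i, ∑ j, |Q⁻¹ i j| with hC'
  have h0Q : 0 ≤ CQ := by positivity
  have h0M : 0 ≤ CM := by positivity
  have h0' : 0 ≤ C' := by positivity
  refine ⟨Real.sqrt (CQ * CM * C'), Real.sqrt_nonneg _, fun x => ?_⟩
  have key : (M *ᵥ x) ⬝ᵥ Q *ᵥ (M *ᵥ x) ≤ (CQ * CM * C') * (x ⬝ᵥ Q *ᵥ x) := by
    calc (M *ᵥ x) ⬝ᵥ Q *ᵥ (M *ᵥ x) ≤ CQ * ((M *ᵥ x) ⬝ᵥ (M *ᵥ x)) := dot_le_const_dot Q (M *ᵥ x)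
      _ ≤ CQ * (CM * (x ⬝ᵥ x)) := mul_le_mul_of_nonneg_left (mulVec_dot_le M x) h0Q
      _ ≤ CQ * (CM * (C' * (x ⬝ᵥ Q *ᵥ x))) :=
          mul_le_mul_of_nonneg_left (mul_le_mul_of_nonneg_left (dot_le_ipq hQ x) h0M) h0Q
      _ = (CQ * CM * C') * (x ⬝ᵥ Q *ᵥ x) := by ring
  calc qnorm Q (M *ᵥ x) = Real.sqrt ((M *ᵥ x) ⬝ᵥ Q *ᵥ (M *ᵥ x)) := rfl
    _ ≤ Real.sqrt ((CQ * CM * C') * (x ⬝ᵥ Q *ᵥ x)) := Real.sqrt_le_sqrt key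
    _ = Real.sqrt (CQ * CM * C') * Real.sqrt (x ⬝ᵥ Q *ᵥ x) :=
        Real.sqrt_mul (mul_nonneg (mul_nonneg h0Q h0M) h0') _
    _ = Real.sqrt (CQ * CM * C') * qnorm Q x := rfl

lemma bddAbove_S {Q : Matrix (Fin n) (Fin n) ℝ} (hQ : Q.PosDef) (M : Matrix (Fin n) (Fin n) ℝ) :
    BddAbove {r : ℝ | ∃ x : Fin n → ℝ, x ≠ 0 ∧ r = qnorm Q (M *ᵥ x) / qnorm Q x} := by
  obtain ⟨C, hC0, hC⟩ := exists_C hQ M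
  refine ⟨C, fun r hr => ?_⟩
  obtain ⟨x, hx, rfl⟩ := hr
  rw [div_le_iff₀ (qnorm_pos hQ hx)]
  exact hC x

lemma le_opNormQ {Q : Matrix (Fin n) (Fin n) ℝ} (hQ : Q.PosDef) (M : Matrix (Fin n) (Fin n) ℝ)
    {x : Fin n → ℝ} (hx : x ≠ 0) :
    qnorm Q (M *ᵥ x) / qnorm Q x ≤ opNormQ Q M :=
  le_csSup (bddAbove_S hQ M) ⟨x, hx, rfl⟩

lemma qnorm_mulVec_le {Q : Matrix (Fin n) (Fin n) ℝ} (hQ : Q.PosDef)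
    (M : Matrix (Fin n) (Fin n) ℝ) (x : Fin n → ℝ) :
    qnorm Q (M *ᵥ x) ≤ opNormQ Q M * qnorm Q x := by
  by_cases hx : x = 0
  · subst hx
    simp [qnorm]
  · have h := le_opNormQ hQ M hx
    rw [div_le_iff₀ (qnorm_pos hQ hx)] at h
    linarith [h]

end DeimAux

open DeimAux in
/-- the DEIM approximation error is bounded by `‖ℙ‖_Q` times the best
Q-norm approximation error from `Ran(U_m)`. -/
theorem deim_error_bound {n m : ℕ} (hm : 0 < m)
    (Q : Matrix (Fin n) (Fin n) ℝ) (hQ : Q.PosDef)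
    (U : Matrix (Fin n) (Fin m) ℝ) (hU : Uᵀ * Q * U = 1)
    (idx : Fin m → Fin n) (hidx : Function.Injective idx)
    (E : Matrix (Fin n) (Fin m) ℝ)
    (hE : ∀ i j, E i j = if i = idx j then 1 else 0)
    (hinv : IsUnit (Eᵀ * U)) :
    ∀ f : Fin n → ℝ,
      qnorm Q (f - (U * (Eᵀ * U)⁻¹ * Eᵀ) *ᵥ f) ≤
        opNormQ Q (U * (Eᵀ * U)⁻¹ * Eᵀ) * qnorm Q ((1 - U * Uᵀ * Q) *ᵥ f) := by
  intro f
  have hQs : Qᵀ = Q := hQ.isHermitian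
  set P : Matrix (Fin n) (Fin n) ℝ := U * (Eᵀ * U)⁻¹ * Eᵀ with hPdef
  have hdetEU : IsUnit (Eᵀ * U).det := (Matrix.isUnit_iff_isUnit_det _).mp hinv
  have hPU : P * U = U := by
    rw [hPdef, Matrix.mul_assoc, Matrix.mul_assoc, Matrix.nonsing_inv_mul _ hdetEU,
      Matrix.mul_one]
  have hPP : P * P = P := by
    calc P * P = (P * U) * ((Eᵀ * U)⁻¹ * Eᵀ) := by
          rw [hPdef]; simp only [Matrix.mul_assoc]
      _ = P := by rw [hPU, hPdef, Matrix.mul_assoc]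
  set w : Fin n → ℝ := (1 - U * Uᵀ * Q) *ᵥ f with hwdef
  -- f - P f = w - P w
  have hmat : (1 - P) * (1 - U * Uᵀ * Q) = 1 - P := by
    have hPUUQ : P * (U * Uᵀ * Q) = U * Uᵀ * Q := by
      calc P * (U * Uᵀ * Q) = (P * U) * (Uᵀ * Q) := by simp only [Matrix.mul_assoc]
        _ = U * Uᵀ * Q := by rw [hPU, Matrix.mul_assoc]
    simp only [Matrix.sub_mul, Matrix.mul_sub, Matrix.one_mul, Matrix.mul_one, hPUUQ]
    abel
  have hw : f - P *ᵥ f = w - P *ᵥ w := by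
    have h1 : f - P *ᵥ f = (1 - P) *ᵥ f := by
      rw [Matrix.sub_mulVec, Matrix.one_mulVec]
    have h2 : w - P *ᵥ w = (1 - P) *ᵥ w := by
      rw [Matrix.sub_mulVec, Matrix.one_mulVec]
    rw [h1, h2, hwdef, Matrix.mulVec_mulVec, hmat, Matrix.sub_mulVec, Matrix.one_mulVec]
  -- orthogonality
  have hUQw : (Uᵀ * Q) *ᵥ w = 0 := by
    have : (Uᵀ * Q) * (1 - U * Uᵀ * Q) = 0 := by
      rw [Matrix.mul_sub, Matrix.mul_one]
      have : Uᵀ * Q * (U * Uᵀ * Q) = Uᵀ * Q := by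
        calc Uᵀ * Q * (U * Uᵀ * Q) = (Uᵀ * Q * U) * (Uᵀ * Q) := by simp only [Matrix.mul_assoc]
          _ = Uᵀ * Q := by rw [hU, Matrix.one_mul]
      rw [this, sub_self]
    rw [hwdef, Matrix.mulVec_mulVec, this, Matrix.zero_mulVec]
  have horth : ∀ s : Fin m → ℝ, w ⬝ᵥ Q *ᵥ (U *ᵥ s) = 0 := by
    intro s
    have hQU : (Q * U)ᵀ = Uᵀ * Q := by rw [Matrix.transpose_mul, hQs]
    rw [Matrix.mulVec_mulVec, Matrix.dotProduct_mulVec, ← Matrix.mulVec_transpose, hQU, hUQw,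
      zero_dotProduct]
  clear_value w
  have hPworth : w ⬝ᵥ Q *ᵥ (P *ᵥ w) = 0 := by
    have : P *ᵥ w = U *ᵥ (((Eᵀ * U)⁻¹ * Eᵀ) *ᵥ w) := by
      rw [hPdef, Matrix.mul_assoc, ← Matrix.mulVec_mulVec]
    rw [this]; exact horth _
  set a : ℝ := qnorm Q (P *ᵥ w) with hadef
  set b : ℝ := qnorm Q w with hbdef
  set c : ℝ := opNormQ Q P with hcdef
  have ha0 : 0 ≤ a := qnorm_nonneg _ _
  have hb0 : 0 ≤ b := qnorm_nonneg _ _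
  -- c ≥ 1
  have hc1 : 1 ≤ c := by
    set s : Fin m → ℝ := fun _ => 1 with hsdef
    set x0 : Fin n → ℝ := U *ᵥ s with hx0def
    have hval : x0 ⬝ᵥ Q *ᵥ x0 = s ⬝ᵥ s := by
      have hQU : (Q * U)ᵀ = Uᵀ * Q := by rw [Matrix.transpose_mul, hQs]
      rw [hx0def, Matrix.mulVec_mulVec, Matrix.dotProduct_mulVec, ← Matrix.mulVec_transpose,
        hQU, Matrix.mulVec_mulVec, hU, Matrix.one_mulVec]
    have hss : s ⬝ᵥ s = (m : ℝ) := by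
      simp [hsdef, dotProduct]
    have hx0 : x0 ≠ 0 := by
      intro h
      rw [h, Matrix.mulVec_zero, dotProduct_zero, hss] at hval
      exact (Nat.cast_ne_zero.mpr hm.ne' : (m : ℝ) ≠ 0) hval.symm
    have hPx0 : P *ᵥ x0 = x0 := by
      rw [hx0def, Matrix.mulVec_mulVec, hPU]
    have hmem : (1 : ℝ) ∈ {r : ℝ | ∃ x : Fin n → ℝ, x ≠ 0 ∧ r = qnorm Q (P *ᵥ x) / qnorm Q x} := by
      refine ⟨x0, hx0, ?_⟩
      rw [hPx0, div_self (qnorm_pos hQ hx0).ne']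
    exact le_csSup (bddAbove_S hQ P) hmem
  have hc0 : 0 < c := lt_of_lt_of_le one_pos hc1
  -- Pythagoras-type expansion
  have hqt : ∀ t : ℝ, qnorm Q (w + t • (P *ᵥ w)) ^ 2 = b ^ 2 + t ^ 2 * a ^ 2 := by
    intro t
    rw [qnorm_sq hQ, ipq_expand hQs, hPworth, qnorm_sq hQ, qnorm_sq hQ]
    ring
  -- per-t inequality
  have pert : ∀ t : ℝ, (1 + t) ^ 2 * a ^ 2 ≤ c ^ 2 * (b ^ 2 + t ^ 2 * a ^ 2) := by
    intro t
    have h := qnorm_mulVec_le hQ P (w + t • (P *ᵥ w))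
    have hL : P *ᵥ (w + t • (P *ᵥ w)) = (1 + t) • (P *ᵥ w) := by
      rw [Matrix.mulVec_add, Matrix.mulVec_smul, Matrix.mulVec_mulVec, hPP]
      rw [add_smul, one_smul]
    rw [hL, qnorm_smul] at h
    have h2 : (|1 + t| * a) ^ 2 ≤ (c * qnorm Q (w + t • (P *ᵥ w))) ^ 2 := by
      apply pow_le_pow_left₀ (mul_nonneg (abs_nonneg _) ha0) h
    rw [mul_pow, sq_abs, mul_pow, hqt t] at h2
    exact h2
  -- conclude b^2 + a^2 ≤ c^2 * b^2
  have key : b ^ 2 + a ^ 2 ≤ c ^ 2 * b ^ 2 := by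
    rcases eq_or_lt_of_le ha0 with h | hapos
    · have hc2 : 1 ≤ c ^ 2 := by nlinarith [hc1]
      have h2 : 1 * b ^ 2 ≤ c ^ 2 * b ^ 2 := mul_le_mul_of_nonneg_right hc2 (sq_nonneg b)
      rw [← h]
      linarith
    · have hquad : ∀ t : ℝ, 0 ≤ ((c ^ 2 - 1) * a ^ 2) * (t * t) + (-(2 * a ^ 2)) * t
          + (c ^ 2 * b ^ 2 - a ^ 2) := by
        intro t
        have := pert t
        nlinarith [this]
      have hd := discrim_le_zero hquad
      rw [discrim] at hd
      have h5 : a ^ 2 * a ^ 2 ≤ a ^ 2 * ((c ^ 2 - 1) * (c ^ 2 * b ^ 2 - a ^ 2)) := by nlinarith [hd]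
      have h6 : a ^ 2 ≤ (c ^ 2 - 1) * (c ^ 2 * b ^ 2 - a ^ 2) :=
        le_of_mul_le_mul_left h5 (by positivity)
      have h7 : c ^ 2 * (b ^ 2 + a ^ 2) ≤ c ^ 2 * (c ^ 2 * b ^ 2) := by nlinarith [h6]
      have h8 := le_of_mul_le_mul_left h7 (by positivity)
      linarith [h8]
  -- finish
  have hsq : qnorm Q (f - P *ᵥ f) ^ 2 = b ^ 2 + a ^ 2 := by
    have hwe : w - P *ᵥ w = w + (-1 : ℝ) • (P *ᵥ w) := by
      rw [neg_one_smul, sub_eq_add_neg]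
    rw [hw, hwe, hqt (-1)]
    ring
  have hfin : qnorm Q (f - P *ᵥ f) ^ 2 ≤ (c * b) ^ 2 := by
    rw [hsq, mul_pow]; linarith [key]
  calc qnorm Q (f - P *ᵥ f) = Real.sqrt (qnorm Q (f - P *ᵥ f) ^ 2) :=
        (Real.sqrt_sq (qnorm_nonneg _ _)).symm
    _ ≤ Real.sqrt ((c * b) ^ 2) := Real.sqrt_le_sqrt hfin
    _ = c * b := Real.sqrt_sq (mul_nonneg hc0.le hb0)
end

section
/- Let Q be symmetric positive definite and 𝒫 ∈ ℝ^{n×n} be a projection (𝒫² = 𝒫) with 𝒫 ≠ 0 and 𝒫 ≠ I. Then ‖I − 𝒫‖_Q = ‖𝒫‖_Q, where ‖·‖_Q is the operator norm induced by the Q-inner product. -/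
open Matrix

namespace CPSQAux

variable {n : ℕ}

/-- Q-inner product. -/
noncomputable def j (Q : Matrix (Fin n) (Fin n) ℝ) (x y : Fin n → ℝ) : ℝ := x ⬝ᵥ Q *ᵥ y

lemma j_symm (Q : Matrix (Fin n) (Fin n) ℝ) (hQ : Q.PosDef) (x y : Fin n → ℝ) :
    j Q x y = j Q y x := by
  have hsym : ∀ i k, Q k i = Q i k := by
    intro i k
    have := congrFun (congrFun hQ.1 i) k
    simpa [Matrix.conjTranspose_apply] using this
  simp only [j, dotProduct, Matrix.mulVec, dotProduct, Finset.mul_sum, Finset.sum_mul]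
  rw [Finset.sum_comm]
  refine Finset.sum_congr rfl fun i _ => Finset.sum_congr rfl fun k _ => ?_
  rw [hsym i k]; ring

lemma j_sub_left (Q : Matrix (Fin n) (Fin n) ℝ) (x y z : Fin n → ℝ) :
    j Q (x - y) z = j Q x z - j Q y z := by
  simp [j, sub_dotProduct]

lemma j_sub_right (Q : Matrix (Fin n) (Fin n) ℝ) (x y z : Fin n → ℝ) :
    j Q x (y - z) = j Q x y - j Q x z := by
  simp [j, Matrix.mulVec_sub, dotProduct_sub]

lemma j_add_right (Q : Matrix (Fin n) (Fin n) ℝ) (x y z : Fin n → ℝ) :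
    j Q x (y + z) = j Q x y + j Q x z := by
  simp [j, Matrix.mulVec_add, dotProduct_add]

lemma j_add_left (Q : Matrix (Fin n) (Fin n) ℝ) (x y z : Fin n → ℝ) :
    j Q (x + y) z = j Q x z + j Q y z := by
  simp [j, add_dotProduct]

lemma j_smul_left (Q : Matrix (Fin n) (Fin n) ℝ) (c : ℝ) (x y : Fin n → ℝ) :
    j Q (c • x) y = c * j Q x y := by
  simp [j, smul_dotProduct]

lemma j_smul_right (Q : Matrix (Fin n) (Fin n) ℝ) (c : ℝ) (x y : Fin n → ℝ) :
    j Q x (c • y) = c * j Q x y := by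
  simp [j, Matrix.mulVec_smul, dotProduct_smul]

lemma j_pos (Q : Matrix (Fin n) (Fin n) ℝ) (hQ : Q.PosDef) {x : Fin n → ℝ} (hx : x ≠ 0) :
    0 < j Q x x := by
  have := hQ.dotProduct_mulVec_pos hx
  simpa [j] using this

lemma j_nonneg (Q : Matrix (Fin n) (Fin n) ℝ) (hQ : Q.PosDef) (x : Fin n → ℝ) :
    0 ≤ j Q x x := by
  by_cases hx : x = 0
  · simp [hx, j]
  · exact (j_pos Q hQ hx).le

lemma qnorm_eq (Q : Matrix (Fin n) (Fin n) ℝ) (x : Fin n → ℝ) :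
    qnorm Q x = Real.sqrt (j Q x x) := rfl

lemma qnorm_pos (Q : Matrix (Fin n) (Fin n) ℝ) (hQ : Q.PosDef) {x : Fin n → ℝ} (hx : x ≠ 0) :
    0 < qnorm Q x := by
  rw [qnorm_eq]
  exact Real.sqrt_pos.mpr (j_pos Q hQ hx)

/-- Key pointwise lemma. -/
lemma key (Q : Matrix (Fin n) (Fin n) ℝ) (hQ : Q.PosDef)
    (P : Matrix (Fin n) (Fin n) ℝ) (hP : P * P = P) (hP0 : P ≠ 0)
    (x : Fin n → ℝ) (hx : x ≠ 0) :
    ∃ y : Fin n → ℝ, y ≠ 0 ∧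
      qnorm Q ((1 - P) *ᵥ x) / qnorm Q x ≤ qnorm Q (P *ᵥ y) / qnorm Q y := by
  set u : Fin n → ℝ := P *ᵥ x with hu_def
  set v : Fin n → ℝ := x - u with hv_def
  have hvx : (1 - P) *ᵥ x = v := by
    rw [Matrix.sub_mulVec, Matrix.one_mulVec]
  have hPu : P *ᵥ u = u := by
    rw [hu_def, Matrix.mulVec_mulVec, hP]
  have hPv : P *ᵥ v = 0 := by
    rw [hv_def, Matrix.mulVec_sub, hPu, sub_self]
  by_cases hv : v = 0
  · -- ratio is 0; use x itself
    refine ⟨x, hx, ?_⟩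
    rw [hvx, hv]
    have : qnorm Q (0 : Fin n → ℝ) = 0 := by simp [qnorm]
    rw [this, zero_div]
    exact div_nonneg (Real.sqrt_nonneg _) (Real.sqrt_nonneg _)
  by_cases hu : u = 0
  · -- x = v, ratio is 1; use a fixed vector of the range of P
    obtain ⟨z, hz⟩ : ∃ z, P *ᵥ z ≠ 0 := by
      by_contra h
      push_neg at h
      apply hP0
      ext i k
      have := congrFun (h (Pi.single k 1)) i
      simpa [Matrix.mulVec_single] using this
    refine ⟨P *ᵥ z, hz, ?_⟩
    have hPPz : P *ᵥ (P *ᵥ z) = P *ᵥ z := by rw [Matrix.mulVec_mulVec, hP]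
    rw [hPPz, hvx]
    have hxv : v = x := by rw [hv_def, hu, sub_zero]
    rw [hxv]
    rw [div_self (qnorm_pos Q hQ hx).ne', div_self (qnorm_pos Q hQ hz).ne']
  · -- general case
    set a : ℝ := j Q u u with ha_def
    set b : ℝ := j Q v v with hb_def
    set s : ℝ := j Q u v with hs_def
    have hb : 0 < b := j_pos Q hQ hv
    set t : ℝ := s / b with ht_def
    set y : Fin n → ℝ := u - t • v with hy_def
    have hPy : P *ᵥ y = u := by
      rw [hy_def, Matrix.mulVec_sub, hPu, Matrix.mulVec_smul, hPv, smul_zero, sub_zero]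
    have hy0 : y ≠ 0 := by
      intro h
      apply hu
      have : u = t • v := by rwa [hy_def, sub_eq_zero] at h
      calc u = P *ᵥ u := hPu.symm
        _ = t • (P *ᵥ v) := by rw [this, Matrix.mulVec_smul]
        _ = 0 := by rw [hPv, smul_zero]
    refine ⟨y, hy0, ?_⟩
    have hsvu : j Q v u = s := j_symm Q hQ v u
    have hjyy : j Q y y = a - s ^ 2 / b := by
      simp only [hy_def, j_sub_left, j_sub_right, j_smul_left, j_smul_right]
      rw [hsvu, ← ha_def, ← hs_def, ← hb_def, ht_def]
      field_simp
      ring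
    have hjxx : j Q x x = a + 2 * s + b := by
      have hx_uv : x = u + v := by rw [hv_def]; abel
      rw [hx_uv, j_add_left, j_add_right, j_add_right, ← ha_def, ← hs_def, hsvu, ← hb_def]
      ring
    have hjyy_pos : 0 < j Q y y := j_pos Q hQ hy0
    have hjxx_pos : 0 < j Q x x := j_pos Q hQ hx
    rw [hvx, hPy, qnorm_eq, qnorm_eq, qnorm_eq, qnorm_eq, ← hb_def]
    rw [div_le_div_iff₀ (Real.sqrt_pos.mpr hjxx_pos) (Real.sqrt_pos.mpr hjyy_pos)]
    rw [← Real.sqrt_mul hb.le, ← Real.sqrt_mul (j_nonneg Q hQ u)]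
    apply Real.sqrt_le_sqrt
    rw [hjyy, hjxx, ← ha_def]
    have hcancel : b * (s ^ 2 / b) = s ^ 2 := mul_div_cancel₀ _ hb.ne'
    nlinarith [sq_nonneg (a + s)]

lemma proj_compl {P : Matrix (Fin n) (Fin n) ℝ} (hP : P * P = P) :
    (1 - P) * (1 - P) = 1 - P := by
  rw [sub_mul, one_mul, mul_sub, mul_one, hP, sub_self, sub_zero]

end CPSQAux

open CPSQAux in
/-- for a nontrivial projection `𝒫`, `‖I − 𝒫‖_Q = ‖𝒫‖_Q`. -/
theorem complementary_projection_same_q_norm {n : ℕ}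
    (Q : Matrix (Fin n) (Fin n) ℝ) (hQ : Q.PosDef)
    (P : Matrix (Fin n) (Fin n) ℝ) (hP : P * P = P) (hP0 : P ≠ 0) (hPI : P ≠ 1) :
    opNormQ Q (1 - P) = opNormQ Q P := by
  have hP' : (1 - P) * (1 - P) = 1 - P := proj_compl hP
  have hP'0 : (1 : Matrix (Fin n) (Fin n) ℝ) - P ≠ 0 := sub_ne_zero_of_ne (Ne.symm hPI)
  have hP'I : (1 : Matrix (Fin n) (Fin n) ℝ) - (1 - P) = P := sub_sub_cancel 1 P
  set S : Matrix (Fin n) (Fin n) ℝ → Set ℝ :=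
    fun M => {r : ℝ | ∃ x : Fin n → ℝ, x ≠ 0 ∧ r = qnorm Q (M *ᵥ x) / qnorm Q x} with hS_def
  have hop : ∀ M, opNormQ Q M = sSup (S M) := fun M => rfl
  -- nonemptiness
  have nonzero_vec : ∀ (M : Matrix (Fin n) (Fin n) ℝ), M ≠ 0 → ∃ z : Fin n → ℝ, z ≠ 0 := by
    intro M hM
    obtain ⟨z, hz⟩ : ∃ z, M *ᵥ z ≠ 0 := by
      by_contra h
      push_neg at h
      apply hM
      ext i k
      have := congrFun (h (Pi.single k 1)) i
      simpa [Matrix.mulVec_single] using this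
    exact ⟨z, fun h => hz (by rw [h, Matrix.mulVec_zero])⟩
  obtain ⟨z, hz⟩ := nonzero_vec P hP0
  have hne : ∀ M : Matrix (Fin n) (Fin n) ℝ, (S M).Nonempty :=
    fun M => ⟨qnorm Q (M *ᵥ z) / qnorm Q z, z, hz, rfl⟩
  -- upper bounds coincide
  have hub : upperBounds (S (1 - P)) = upperBounds (S P) := by
    ext r
    constructor
    · intro hr a ha
      obtain ⟨x, hx, rfl⟩ := ha
      obtain ⟨y, hy, hle⟩ := key Q hQ (1 - P) hP' hP'0 x hx
      rw [hP'I] at hle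
      exact le_trans hle (hr ⟨y, hy, rfl⟩)
    · intro hr a ha
      obtain ⟨x, hx, rfl⟩ := ha
      obtain ⟨y, hy, hle⟩ := key Q hQ P hP hP0 x hx
      exact le_trans hle (hr ⟨y, hy, rfl⟩)
  rw [hop, hop]
  by_cases hbdd : BddAbove (S P)
  · have hbdd' : BddAbove (S (1 - P)) := by
      obtain ⟨r, hr⟩ := hbdd
      exact ⟨r, hub ▸ hr⟩
    apply le_antisymm
    · apply csSup_le (hne _)
      intro a ha
      have : sSup (S P) ∈ upperBounds (S (1 - P)) := hub ▸ (isLUB_csSup (hne _) hbdd).1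
      exact this ha
    · apply csSup_le (hne _)
      intro a ha
      have : sSup (S (1 - P)) ∈ upperBounds (S P) := hub ▸ (isLUB_csSup (hne _) hbdd').1
      exact this ha
  · have hbdd' : ¬ BddAbove (S (1 - P)) := by
      intro ⟨r, hr⟩
      exact hbdd ⟨r, hub ▸ hr⟩
    rw [Real.sSup_of_not_bddAbove hbdd, Real.sSup_of_not_bddAbove hbdd']
end

section
/- Let Q be symmetric positive definite and ℙ ∈ ℝ^{n×n}. Then ‖ℙᵀ‖_{Q^{-1}} = ‖ℙ‖_Q, where ‖M‖_Q is the operator norm induced by ‖x‖_Q = √(xᵀQx) and ‖M‖_{Q^{-1}} that induced by ‖x‖_{Q^{-1}} = √(xᵀQ^{-1}x). In particular if ℙ is a nontrivial projection, ‖I − ℙᵀ‖_{Q^{-1}} = ‖ℙ‖_Q. -/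
open Matrix

namespace TQIN

variable {n : ℕ}

/-- Euclidean norm of a vector. -/
noncomputable def en (x : Fin n → ℝ) : ℝ := Real.sqrt (x ⬝ᵥ x)

lemma dot_self_nonneg (x : Fin n → ℝ) : 0 ≤ x ⬝ᵥ x :=
  Finset.sum_nonneg fun i _ => mul_self_nonneg (x i)

lemma en_nonneg (x : Fin n → ℝ) : 0 ≤ en x := Real.sqrt_nonneg _

lemma en_sq (x : Fin n → ℝ) : en x ^ 2 = x ⬝ᵥ x := Real.sq_sqrt (dot_self_nonneg x)

lemma en_eq_zero {x : Fin n → ℝ} : en x = 0 ↔ x = 0 := by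
  rw [en, Real.sqrt_eq_zero (dot_self_nonneg x), dotProduct_self_eq_zero]

lemma en_pos {x : Fin n → ℝ} (hx : x ≠ 0) : 0 < en x :=
  (en_nonneg x).lt_of_ne fun h => hx (en_eq_zero.mp h.symm)

lemma qnorm_one (x : Fin n → ℝ) : qnorm 1 x = en x := by
  rw [qnorm, en, one_mulVec]

lemma en_smul (c : ℝ) (x : Fin n → ℝ) : en (c • x) = |c| * en x := by
  rw [en, smul_dotProduct, dotProduct_smul, smul_eq_mul, smul_eq_mul, ← mul_assoc,
    Real.sqrt_mul (mul_self_nonneg c), Real.sqrt_mul_self_eq_abs, en]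

/-- The ratio set defining `opNormQ 1`. -/
def rset (M : Matrix (Fin n) (Fin n) ℝ) : Set ℝ :=
  {r | ∃ x : Fin n → ℝ, x ≠ 0 ∧ r = en (M *ᵥ x) / en x}

lemma opNormQ_one (M : Matrix (Fin n) (Fin n) ℝ) : opNormQ 1 M = sSup (rset M) := by
  unfold opNormQ rset
  simp_rw [qnorm_one]

lemma dot_mulVec_self_le (A : Matrix (Fin n) (Fin n) ℝ) (x : Fin n → ℝ) :
    (A *ᵥ x) ⬝ᵥ (A *ᵥ x) ≤ (∑ i, ∑ j, A i j ^ 2) * (x ⬝ᵥ x) := by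
  have hx : x ⬝ᵥ x = ∑ j, x j ^ 2 := by simp [dotProduct, sq]
  rw [hx, Finset.sum_mul, dotProduct]
  apply Finset.sum_le_sum
  intro i _
  have h := Finset.sum_mul_sq_le_sq_mul_sq Finset.univ (fun j => A i j) x
  calc (A *ᵥ x) i * (A *ᵥ x) i = (∑ j, A i j * x j) ^ 2 := by rw [sq]; rfl
    _ ≤ (∑ j, A i j ^ 2) * (∑ j, x j ^ 2) := h

lemma en_mulVec_le (A : Matrix (Fin n) (Fin n) ℝ) (x : Fin n → ℝ) :
    en (A *ᵥ x) ≤ Real.sqrt (∑ i, ∑ j, A i j ^ 2) * en x := by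
  rw [en, en, ← Real.sqrt_mul (by positivity)]
  exact Real.sqrt_le_sqrt (dot_mulVec_self_le A x)

lemma rset_bdd (M : Matrix (Fin n) (Fin n) ℝ) : BddAbove (rset M) := by
  refine ⟨Real.sqrt (∑ i, ∑ j, M i j ^ 2), ?_⟩
  rintro r ⟨x, hx, rfl⟩
  rw [div_le_iff₀ (en_pos hx)]
  exact en_mulVec_le M x

lemma ratio_le (M : Matrix (Fin n) (Fin n) ℝ) {x : Fin n → ℝ} (hx : x ≠ 0) :
    en (M *ᵥ x) / en x ≤ opNormQ 1 M := by
  rw [opNormQ_one]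
  exact le_csSup (rset_bdd M) ⟨x, hx, rfl⟩

lemma opN_nonneg (M : Matrix (Fin n) (Fin n) ℝ) : 0 ≤ opNormQ 1 M := by
  rw [opNormQ_one]
  apply Real.sSup_nonneg
  rintro r ⟨x, hx, rfl⟩
  exact div_nonneg (en_nonneg _) (en_nonneg _)

lemma en_mulVec_le_op (M : Matrix (Fin n) (Fin n) ℝ) (x : Fin n → ℝ) :
    en (M *ᵥ x) ≤ opNormQ 1 M * en x := by
  rcases eq_or_ne x 0 with rfl | hx
  · simp [mulVec_zero, en_eq_zero.mpr rfl]
  · rw [← div_le_iff₀ (en_pos hx)] at *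
    exact ratio_le M hx

lemma continuous_en : Continuous (en : (Fin n → ℝ) → ℝ) := by
  have : (en : (Fin n → ℝ) → ℝ) = fun x => Real.sqrt (∑ i, x i * x i) := rfl
  rw [this]
  exact Real.continuous_sqrt.comp
    (continuous_finset_sum _ fun i _ => (continuous_apply i).mul (continuous_apply i))

lemma continuous_mulVec (M : Matrix (Fin n) (Fin n) ℝ) :
    Continuous fun x : Fin n → ℝ => M *ᵥ x := by
  apply continuous_pi
  intro i
  have : (fun x : Fin n → ℝ => (M *ᵥ x) i) = fun x => ∑ j, M i j * x j := rfl
  rw [this]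
  exact continuous_finset_sum _ fun j _ => continuous_const.mul (continuous_apply j)

lemma exists_max (M : Matrix (Fin n) (Fin n) ℝ) (hn : 0 < n) :
    ∃ x : Fin n → ℝ, en x = 1 ∧ en (M *ᵥ x) = opNormQ 1 M := by
  set s : Set (Fin n → ℝ) := {x | en x = 1} with hs
  have hclosed : IsClosed s := isClosed_eq continuous_en continuous_const
  have hbdd : Bornology.IsBounded s := by
    apply (Metric.isBounded_closedBall (x := (0 : Fin n → ℝ)) (r := 1)).subset
    intro x hx
    simp only [Metric.mem_closedBall, dist_zero_right]
    rw [pi_norm_le_iff_of_nonneg zero_le_one]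
    intro i
    have h1 : x i * x i ≤ x ⬝ᵥ x := by
      apply Finset.single_le_sum (fun j _ => mul_self_nonneg (x j)) (Finset.mem_univ i)
    have h2 : x ⬝ᵥ x = 1 := by
      have := en_sq x
      rw [show en x = 1 from hx] at this
      simpa using this.symm
    rw [Real.norm_eq_abs, ← Real.sqrt_mul_self_eq_abs]
    rw [show (1 : ℝ) = Real.sqrt 1 from (Real.sqrt_one).symm]
    exact Real.sqrt_le_sqrt (by linarith)
  have hcomp : IsCompact s := Metric.isCompact_of_isClosed_isBounded hclosed hbdd
  have hne : s.Nonempty := by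
    refine ⟨Pi.single ⟨0, hn⟩ 1, ?_⟩
    simp only [hs, Set.mem_setOf_eq, en]
    rw [show (Pi.single (⟨0, hn⟩ : Fin n) 1 : Fin n → ℝ) ⬝ᵥ Pi.single ⟨0, hn⟩ 1 = 1 by
      simp [dotProduct, Pi.single_apply]]
    exact Real.sqrt_one
  have hcont : Continuous fun x : Fin n → ℝ => en (M *ᵥ x) :=
    continuous_en.comp (continuous_mulVec M)
  obtain ⟨x, hxs, hmax⟩ := hcomp.exists_isMaxOn hne hcont.continuousOn
  have hx1 : en x = 1 := hxs
  refine ⟨x, hx1, ?_⟩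
  have hx0 : x ≠ 0 := fun h => by rw [h, en_eq_zero.mpr rfl] at hx1; norm_num at hx1
  apply le_antisymm
  · have := ratio_le M hx0
    rw [hx1, div_one] at this
    exact this
  · rw [opNormQ_one]
    apply Real.sSup_le
    · rintro r ⟨y, hy, rfl⟩
      have hey := en_pos hy
      have hmem : (en y)⁻¹ • y ∈ s := by
        simp only [hs, Set.mem_setOf_eq, en_smul, abs_of_pos (inv_pos.mpr hey)]
        field_simp
      have := hmax hmem
      simp only [Set.mem_setOf_eq] at this
      rw [mulVec_smul, en_smul, abs_of_pos (inv_pos.mpr hey)] at this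
      rw [div_eq_inv_mul]
      exact this
    · exact en_nonneg _

lemma scalar_aux {s q : ℝ} (hq : 0 ≤ q) (h : ∀ t : ℝ, 0 ≤ 2 * s * t + q * t ^ 2) : s = 0 := by
  by_contra hs
  have hq1 : 0 < q + 1 := by linarith
  have hss : 0 < s ^ 2 := by positivity
  have h1 := h (-s / (q + 1))
  have key : 2 * s * (-s / (q + 1)) + q * (-s / (q + 1)) ^ 2
      = -(s ^ 2 * (q + 2) / (q + 1) ^ 2) := by
    field_simp
    ring
  rw [key] at h1
  have hpos : 0 < s ^ 2 * (q + 2) / (q + 1) ^ 2 :=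
    div_pos (mul_pos hss (by linarith)) (pow_pos hq1 2)
  linarith

lemma exists_eig (M : Matrix (Fin n) (Fin n) ℝ) (hn : 0 < n) :
    ∃ x : Fin n → ℝ, en x = 1 ∧ en (M *ᵥ x) = opNormQ 1 M ∧
      (Mᵀ * M) *ᵥ x = ((opNormQ 1 M) ^ 2) • x := by
  obtain ⟨x, hx1, hx2⟩ := exists_max M hn
  set m := opNormQ 1 M with hm
  have key : ∀ y : Fin n → ℝ, (M *ᵥ y) ⬝ᵥ (M *ᵥ y) ≤ m ^ 2 * (y ⬝ᵥ y) := by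
    intro y
    have h := en_mulVec_le_op M y
    have h2 := mul_self_le_mul_self (en_nonneg _) h
    rw [← sq, ← sq] at h2
    rw [en_sq] at h2
    calc (M *ᵥ y) ⬝ᵥ (M *ᵥ y) ≤ (m * en y) ^ 2 := h2
      _ = m ^ 2 * (en y) ^ 2 := by ring
      _ = m ^ 2 * (y ⬝ᵥ y) := by rw [en_sq]
  have hxx : x ⬝ᵥ x = 1 := by
    have := en_sq x; rw [hx1] at this; simpa using this.symm
  have hMx : (M *ᵥ x) ⬝ᵥ (M *ᵥ x) = m ^ 2 := by
    have := en_sq (M *ᵥ x); rw [hx2] at this; exact this.symm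
  have main : ∀ y : Fin n → ℝ, (M *ᵥ x) ⬝ᵥ (M *ᵥ y) = m ^ 2 * (x ⬝ᵥ y) := by
    intro y
    have hexp : ∀ t : ℝ, 0 ≤ 2 * (m ^ 2 * (x ⬝ᵥ y) - (M *ᵥ x) ⬝ᵥ (M *ᵥ y)) * t +
        (m ^ 2 * (y ⬝ᵥ y) - (M *ᵥ y) ⬝ᵥ (M *ᵥ y)) * t ^ 2 := by
      intro t
      have h := key (x + t • y)
      rw [mulVec_add, mulVec_smul] at h
      simp only [add_dotProduct, dotProduct_add, smul_dotProduct, dotProduct_smul,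
        smul_eq_mul] at h
      have hcomm1 : y ⬝ᵥ x = x ⬝ᵥ y := dotProduct_comm y x
      have hcomm2 : (M *ᵥ y) ⬝ᵥ (M *ᵥ x) = (M *ᵥ x) ⬝ᵥ (M *ᵥ y) := dotProduct_comm _ _
      rw [hcomm1, hcomm2, hxx, hMx] at h
      nlinarith [h]
    have hq : 0 ≤ m ^ 2 * (y ⬝ᵥ y) - (M *ᵥ y) ⬝ᵥ (M *ᵥ y) := sub_nonneg.mpr (key y)
    have := scalar_aux hq hexp
    linarith [this]
  refine ⟨x, hx1, hx2, ?_⟩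
  set w := (Mᵀ * M) *ᵥ x - (m ^ 2) • x with hw
  have hyw : ∀ y : Fin n → ℝ, y ⬝ᵥ w = 0 := by
    intro y
    have h1 : y ⬝ᵥ ((Mᵀ * M) *ᵥ x) = (M *ᵥ y) ⬝ᵥ (M *ᵥ x) := by
      rw [← mulVec_mulVec, dotProduct_mulVec, vecMul_transpose]
    rw [hw, dotProduct_sub, h1, dotProduct_smul, smul_eq_mul,
      dotProduct_comm (M *ᵥ y), main y, dotProduct_comm y x]
    ring
  have hww : w = 0 := dotProduct_self_eq_zero.mp (hyw w)
  rw [sub_eq_zero] at hww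
  exact hww

lemma opN_empty (M : Matrix (Fin 0) (Fin 0) ℝ) (N : Matrix (Fin 0) (Fin 0) ℝ) :
    opNormQ 1 M = opNormQ 1 N := by
  have h : ∀ K : Matrix (Fin 0) (Fin 0) ℝ, rset K = ∅ := by
    intro K
    ext r
    simp only [rset, Set.mem_setOf_eq, Set.mem_empty_iff_false, iff_false, not_exists]
    intro x ⟨hx, _⟩
    exact hx (Subsingleton.elim x 0)
  rw [opNormQ_one, opNormQ_one, h M, h N]

lemma opN_transpose_le (M : Matrix (Fin n) (Fin n) ℝ) :
    opNormQ 1 Mᵀ ≤ opNormQ 1 M := by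
  rcases Nat.eq_zero_or_pos n with h0 | hn
  · subst h0
    exact le_of_eq (opN_empty Mᵀ M)
  obtain ⟨x, hx1, hx2, hx3⟩ := exists_eig Mᵀ hn
  set m := opNormQ 1 Mᵀ with hm
  rcases eq_or_lt_of_le (opN_nonneg Mᵀ) with h0 | hpos
  · rw [hm, ← h0]; exact opN_nonneg M
  set v := Mᵀ *ᵥ x with hv
  have henv : en v = m := hx2
  have hv0 : v ≠ 0 := fun h => by rw [h, en_eq_zero.mpr rfl] at henv; exact hpos.ne henv
  have hMv : M *ᵥ v = (m ^ 2) • x := by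
    rw [hv, mulVec_mulVec, ← transpose_transpose M, transpose_transpose]
    rw [show M * Mᵀ = Mᵀᵀ * Mᵀ by rw [transpose_transpose]]
    exact hx3
  have hratio : en (M *ᵥ v) / en v = m := by
    rw [hMv, en_smul, hx1, henv, abs_of_nonneg (sq_nonneg m), mul_one, sq]
    field_simp
  have := ratio_le M hv0
  rw [hratio] at this
  exact this

lemma opN_transpose (M : Matrix (Fin n) (Fin n) ℝ) : opNormQ 1 Mᵀ = opNormQ 1 M := by
  refine le_antisymm (opN_transpose_le M) ?_
  have := opN_transpose_le Mᵀ
  rwa [transpose_transpose] at this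

lemma exists_mulVec_ne_zero {A : Matrix (Fin n) (Fin n) ℝ} (h0 : A ≠ 0) :
    ∃ x : Fin n → ℝ, A *ᵥ x ≠ 0 := by
  by_contra h
  push_neg at h
  apply h0
  ext i j
  have := congrFun (h (Pi.single j 1)) i
  simpa using this

lemma idem_ge_one {A : Matrix (Fin n) (Fin n) ℝ} (hA : A * A = A) (h0 : A ≠ 0) :
    1 ≤ opNormQ 1 A := by
  obtain ⟨x, hx⟩ := exists_mulVec_ne_zero h0
  have h1 : A *ᵥ (A *ᵥ x) = A *ᵥ x := by rw [mulVec_mulVec, hA]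
  have := ratio_le A hx
  rwa [h1, div_self (en_pos hx).ne'] at this

lemma kato_le {A : Matrix (Fin n) (Fin n) ℝ} (hA : A * A = A) (h0 : A ≠ 0) (h1 : A ≠ 1) :
    opNormQ 1 (1 - A) ≤ opNormQ 1 A := by
  have hn : 0 < n := by
    rcases Nat.eq_zero_or_pos n with h | h
    · exfalso; subst h; exact h0 (Subsingleton.elim A 0)
    · exact h
  set B := (1 : Matrix (Fin n) (Fin n) ℝ) - A with hBdef
  have hB : B * B = B := by
    rw [hBdef, sub_mul, one_mul, mul_sub, mul_one, hA]
    abel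
  have hB0 : B ≠ 0 := fun h => h1 (by rwa [sub_eq_zero, eq_comm] at h)
  have hA1 : 1 ≤ opNormQ 1 A := idem_ge_one hA h0
  obtain ⟨x, hx1, hx2, hx3⟩ := exists_eig B hn
  set m := opNormQ 1 B with hm
  by_cases hmle : m ≤ 1
  · exact hmle.trans hA1
  push_neg at hmle
  have hm0 : 0 < m := lt_trans one_pos hmle
  have hm2 : (1 : ℝ) < m ^ 2 := by nlinarith
  set y := B *ᵥ x with hy
  have hxx : x ⬝ᵥ x = 1 := by
    have := en_sq x; rw [hx1] at this; simpa using this.symm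
  have hyy : y ⬝ᵥ y = m ^ 2 := by
    have := en_sq y; rw [hy] at this ⊢; rw [hx2] at this; exact this.symm
  have hBy : B *ᵥ y = y := by rw [hy, mulVec_mulVec, hB]
  have hBty : Bᵀ *ᵥ y = (m ^ 2) • x := by rw [hy, mulVec_mulVec]; exact hx3
  have hxy : x ⬝ᵥ y = 1 := by
    have h1' : y ⬝ᵥ (Bᵀ *ᵥ y) = m ^ 2 * (y ⬝ᵥ x) := by
      rw [hBty, dotProduct_smul, smul_eq_mul]
    have h2' : y ⬝ᵥ (Bᵀ *ᵥ y) = y ⬝ᵥ y := by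
      rw [dotProduct_mulVec, vecMul_transpose, hBy]
    rw [h2', hyy] at h1'
    have hm2' : (m : ℝ) ^ 2 ≠ 0 := by positivity
    have : y ⬝ᵥ x = 1 := mul_left_cancel₀ hm2' (by rw [← h1', mul_one])
    rw [dotProduct_comm]; exact this
  set u := x - (m ^ 2)⁻¹ • y with hu
  have hm2ne : (m : ℝ) ^ 2 ≠ 0 := by positivity
  have huu : u ⬝ᵥ u = 1 - (m ^ 2)⁻¹ := by
    rw [hu]
    simp only [sub_dotProduct, dotProduct_sub, smul_dotProduct, dotProduct_smul, smul_eq_mul]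
    rw [hxx, hyy, dotProduct_comm y x, hxy]
    field_simp
    ring
  have hupos : 0 < u ⬝ᵥ u := by
    rw [huu]
    have : (m ^ 2)⁻¹ < 1 := by
      rw [inv_lt_one_iff₀]; right; exact hm2
    linarith
  have hu0 : u ≠ 0 := by
    intro h
    rw [h] at hupos
    simp at hupos
  have hAu : A *ᵥ u = x - y := by
    have hAeq : A = 1 - B := by rw [hBdef]; abel
    rw [hAeq, sub_mulVec, one_mulVec]
    rw [hu, mulVec_sub, mulVec_smul, hBy, ← hy]
    abel
  have hAuAu : (A *ᵥ u) ⬝ᵥ (A *ᵥ u) = m ^ 2 - 1 := by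
    rw [hAu]
    simp only [sub_dotProduct, dotProduct_sub]
    rw [hxx, hyy, hxy, dotProduct_comm y x, hxy]
    ring
  have hsqpos : 0 < Real.sqrt (m ^ 2 - 1) := Real.sqrt_pos.mpr (by linarith)
  have hratio : en (A *ᵥ u) / en u = m := by
    have h1' : en (A *ᵥ u) = Real.sqrt (m ^ 2 - 1) := by rw [en, hAuAu]
    have h2' : en u = Real.sqrt (m ^ 2 - 1) / m := by
      rw [en, huu]
      rw [show (1 : ℝ) - (m ^ 2)⁻¹ = (m ^ 2 - 1) / m ^ 2 by field_simp]
      rw [Real.sqrt_div (by linarith), Real.sqrt_sq hm0.le]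
    rw [h1', h2', div_div_eq_mul_div, mul_comm, mul_div_assoc, div_self hsqpos.ne', mul_one]
  have := ratio_le A hu0
  rwa [hratio] at this

lemma kato {A : Matrix (Fin n) (Fin n) ℝ} (hA : A * A = A) (h0 : A ≠ 0) (h1 : A ≠ 1) :
    opNormQ 1 (1 - A) = opNormQ 1 A := by
  refine le_antisymm (kato_le hA h0 h1) ?_
  have hB : (1 - A) * (1 - A) = 1 - A := by
    rw [sub_mul, one_mul, mul_sub, mul_one, hA]; abel
  have hB0 : (1 : Matrix (Fin n) (Fin n) ℝ) - A ≠ 0 := fun h =>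
    h1 (by rwa [sub_eq_zero, eq_comm] at h)
  have hB1 : (1 : Matrix (Fin n) (Fin n) ℝ) - A ≠ 1 := fun h => h0 (by
    have := sub_eq_self.mp h  -- 1 - A = 1 → A = 0? sub_eq_self : a - b = a ↔ b = 0
    exact this)
  have := kato_le hB hB0 hB1
  rwa [sub_sub_cancel] at this

lemma opNormQ_conj (S M : Matrix (Fin n) (Fin n) ℝ) (hS : IsUnit S.det) :
    opNormQ (Sᵀ * S) M = opNormQ 1 (S * M * S⁻¹) := by
  have hq : ∀ z : Fin n → ℝ, qnorm (Sᵀ * S) z = qnorm 1 (S *ᵥ z) := by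
    intro z
    rw [qnorm, qnorm, one_mulVec, ← mulVec_mulVec, dotProduct_mulVec, vecMul_transpose]
  have hSinv : ∀ z : Fin n → ℝ, S⁻¹ *ᵥ (S *ᵥ z) = z := fun z => by
    rw [mulVec_mulVec, nonsing_inv_mul S hS, one_mulVec]
  have hSS : ∀ z : Fin n → ℝ, S *ᵥ (S⁻¹ *ᵥ z) = z := fun z => by
    rw [mulVec_mulVec, mul_nonsing_inv S hS, one_mulVec]
  unfold opNormQ
  congr 1
  ext r
  constructor
  · rintro ⟨x, hx, rfl⟩
    refine ⟨S *ᵥ x, fun h => hx (by rw [← hSinv x, h, mulVec_zero]), ?_⟩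
    rw [hq, hq]
    congr 2
    simp only [mulVec_mulVec, Matrix.mul_assoc, nonsing_inv_mul S hS, Matrix.mul_one]
  · rintro ⟨y, hy, rfl⟩
    refine ⟨S⁻¹ *ᵥ y, fun h => hy (by rw [← hSS y, h, mulVec_zero]), ?_⟩
    rw [hq, hq, hSS]
    congr 2
    simp only [mulVec_mulVec, Matrix.mul_assoc]

end TQIN

open TQIN in
/-- `‖ℙᵀ‖_{Q⁻¹} = ‖ℙ‖_Q`, and for a nontrivial projection `ℙ`,
`‖I − ℙᵀ‖_{Q⁻¹} = ‖ℙ‖_Q`. -/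
theorem transpose_q_inv_norm {n : ℕ}
    (Q : Matrix (Fin n) (Fin n) ℝ) (hQ : Q.PosDef)
    (P : Matrix (Fin n) (Fin n) ℝ) :
    opNormQ Q⁻¹ Pᵀ = opNormQ Q P ∧
    (P * P = P → P ≠ 0 → P ≠ 1 → opNormQ Q⁻¹ (1 - Pᵀ) = opNormQ Q P) := by
  obtain ⟨S, hSh, hSS⟩ : ∃ S : Matrix (Fin n) (Fin n) ℝ, Sᵀ = S ∧ S * S = Q := by
    open scoped MatrixOrder in
    exact ⟨CFC.sqrt Q, by
      have h := (CFC.sqrt_nonneg Q).posSemidef.isHermitian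
      rwa [Matrix.IsHermitian, conjTranspose_eq_transpose_of_trivial] at h,
      CFC.sqrt_mul_sqrt_self Q hQ.posSemidef.nonneg⟩
  have hdet : IsUnit S.det := by
    have hd : S.det * S.det = Q.det := by rw [← det_mul, hSS]
    have hQd := hQ.det_pos
    refine isUnit_iff_ne_zero.mpr fun h => ?_
    rw [h, mul_zero] at hd
    rw [← hd] at hQd
    exact lt_irrefl 0 hQd
  have hQeq : Q = Sᵀ * S := by rw [hSh, hSS]
  have hdetinv : IsUnit (S⁻¹).det := isUnit_nonsing_inv_det S hdet
  have hQinv : Q⁻¹ = (S⁻¹)ᵀ * S⁻¹ := by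
    rw [hQeq, Matrix.mul_inv_rev, transpose_nonsing_inv, hSh]
  have hSinvinv : S⁻¹⁻¹ = S := nonsing_inv_nonsing_inv S hdet
  have key1 : ∀ R : Matrix (Fin n) (Fin n) ℝ,
      opNormQ Q⁻¹ Rᵀ = opNormQ 1 ((S * R * S⁻¹)ᵀ) := by
    intro R
    rw [hQinv, opNormQ_conj _ _ hdetinv, hSinvinv]
    congr 1
    rw [transpose_mul, transpose_mul, transpose_nonsing_inv, hSh, Matrix.mul_assoc]
  have key2 : opNormQ Q P = opNormQ 1 (S * P * S⁻¹) := by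
    rw [hQeq, opNormQ_conj _ _ hdet]
  constructor
  · rw [key1 P, opN_transpose, key2]
  · intro hP hP0 hP1
    set A := S * P * S⁻¹ with hAdef
    have hrec : P = S⁻¹ * A * S := by
      rw [hAdef, Matrix.mul_assoc, Matrix.mul_assoc, nonsing_inv_mul S hdet, Matrix.mul_one,
        ← Matrix.mul_assoc, nonsing_inv_mul S hdet, Matrix.one_mul]
    have hA : A * A = A := by
      rw [hAdef]
      rw [show S * P * S⁻¹ * (S * P * S⁻¹) = S * P * (S⁻¹ * S) * P * S⁻¹ by
        simp only [Matrix.mul_assoc]]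
      rw [nonsing_inv_mul S hdet, Matrix.mul_one, show S * P * P * S⁻¹ = S * (P * P) * S⁻¹ by
        simp only [Matrix.mul_assoc], hP]
    have hA0 : A ≠ 0 := fun h => hP0 (by rw [hrec, h, Matrix.mul_zero, Matrix.zero_mul])
    have hA1 : A ≠ 1 := fun h => hP1 (by
      rw [hrec, h, Matrix.mul_one, nonsing_inv_mul S hdet])
    have hSP : S * (1 - P) * S⁻¹ = 1 - A := by
      rw [Matrix.mul_sub, Matrix.mul_one, Matrix.sub_mul, mul_nonsing_inv S hdet, hAdef]
    have h1Pt : (1 : Matrix (Fin n) (Fin n) ℝ) - Pᵀ = (1 - P)ᵀ := by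
      rw [transpose_sub, transpose_one]
    rw [h1Pt, key1 (1 - P), opN_transpose, hSP, kato hA hA0 hA1, key2]
end

section
/- Let Q be symmetric positive definite, let h : ℝⁿ → ℝ be continuously differentiable on a convex open set containing the segment between x and ℙᵀx, where ℙ is a projection constructed as ℙ = U(EᵀU)^{-1}Eᵀ with UᵀQU = I and E a column-selection of the identity. Suppose ‖Ũᵀ Q ∇h(ξ)‖ ≤ ε for all ξ on the segment between ℙᵀx and x, where Ũ spans the Q-orthogonal complement of Ran(U) with ŨᵀQŨ = I. Then |h(x) − h(ℙᵀx)| ≤ ‖(I − ℙᵀ)x‖_{Q^{-1}} · ε. -/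
open Matrix
open scoped RealInnerProductSpace

lemma outer_sum_eq_inv {n m k : ℕ} (hdim : m + k = n)
    (Q : Matrix (Fin n) (Fin n) ℝ) (hQ : Q.PosDef)
    (U : Matrix (Fin n) (Fin m) ℝ) (hU : Uᵀ * Q * U = 1)
    (Util : Matrix (Fin n) (Fin k) ℝ) (hUtil : Utilᵀ * Q * Util = 1)
    (horth : Uᵀ * Q * Util = 0) :
    (U * Uᵀ + Util * Utilᵀ) * Q = 1 := by
  have hQsymm : Qᵀ = Q := by
    have := hQ.isHermitian.eq
    rwa [Matrix.conjTranspose_eq_transpose_of_trivial] at this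
  have horth' : Utilᵀ * Q * U = 0 := by
    have := congrArg Matrix.transpose horth
    simpa [Matrix.transpose_mul, hQsymm, Matrix.mul_assoc] using this
  have h1 : fromRows Uᵀ Utilᵀ * Q * fromCols U Util = 1 := by
    rw [Matrix.fromRows_mul, Matrix.fromRows_mul_fromCols, hU, hUtil, horth, horth']
    exact Matrix.fromBlocks_one
  have e : Fin n ≃ Fin m ⊕ Fin k := (finCongr hdim.symm).trans finSumFinEquiv.symm
  have h1' : fromRows (Uᵀ * Q) (Utilᵀ * Q) * fromCols U Util = 1 := by
    rw [← Matrix.fromRows_mul]; exact h1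
  have h2 := (Matrix.fromCols_mul_fromRows_eq_one_comm e U Util _ _).mpr h1'
  rw [Matrix.fromCols_mul_fromRows] at h2
  rw [add_mul, Matrix.mul_assoc, Matrix.mul_assoc]
  exact h2

lemma tEL_mul {p q r : ℕ} (A : Matrix (Fin p) (Fin q) ℝ) (B : Matrix (Fin q) (Fin r) ℝ)
    (v : EuclideanSpace ℝ (Fin r)) :
    Matrix.toEuclideanLin (A * B) v = Matrix.toEuclideanLin A (Matrix.toEuclideanLin B v) := by
  simp [Matrix.toEuclideanLin_apply, Matrix.mulVec_mulVec]

lemma tEL_one {p : ℕ} (v : EuclideanSpace ℝ (Fin p)) :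
    Matrix.toEuclideanLin (1 : Matrix (Fin p) (Fin p) ℝ) v = v := by
  simp [Matrix.toEuclideanLin_apply]

lemma tEL_adj {p q : ℕ} (A : Matrix (Fin p) (Fin q) ℝ) (u : EuclideanSpace ℝ (Fin q))
    (v : EuclideanSpace ℝ (Fin p)) :
    ⟪Matrix.toEuclideanLin A u, v⟫ = ⟪u, Matrix.toEuclideanLin Aᵀ v⟫ := by
  rw [← Matrix.conjTranspose_eq_transpose_of_trivial,
    Matrix.toEuclideanLin_conjTranspose_eq_adjoint]
  exact (LinearMap.adjoint_inner_right _ _ _).symm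


/-- Lemma 3.2, specialized: pointwise bound for the symmetrized DEIM
error of the Hamiltonian nonlinearity:
`|h(x) − h(ℙᵀx)| ≤ ‖(I − ℙᵀ)x‖_{Q⁻¹} · ε`. -/
theorem deim_hamiltonian_value_bound {n m k : ℕ} (hdim : m + k = n)
    (Q : Matrix (Fin n) (Fin n) ℝ) (hQ : Q.PosDef)
    (U : Matrix (Fin n) (Fin m) ℝ) (hU : Uᵀ * Q * U = 1)
    (Util : Matrix (Fin n) (Fin k) ℝ) (hUtil : Utilᵀ * Q * Util = 1)
    (horth : Uᵀ * Q * Util = 0)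
    (idx : Fin m → Fin n) (hidx : Function.Injective idx)
    (E : Matrix (Fin n) (Fin m) ℝ)
    (hE : ∀ i j, E i j = if i = idx j then 1 else 0)
    (hinv : IsUnit (Eᵀ * U))
    (P : Matrix (Fin n) (Fin n) ℝ) (hP : P = U * (Eᵀ * U)⁻¹ * Eᵀ)
    (h : EuclideanSpace ℝ (Fin n) → ℝ)
    (gradh : EuclideanSpace ℝ (Fin n) → EuclideanSpace ℝ (Fin n))
    (x : EuclideanSpace ℝ (Fin n))
    (S : Set (EuclideanSpace ℝ (Fin n))) (hSopen : IsOpen S) (hSconv : Convex ℝ S)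
    (hseg : segment ℝ (Matrix.toEuclideanLin Pᵀ x) x ⊆ S)
    (hdiff : ∀ ξ ∈ S, HasGradientAt h (gradh ξ) ξ)
    (hcont : ContinuousOn gradh S)
    (ε : ℝ) (hε : 0 ≤ ε)
    (hbd : ∀ ξ ∈ segment ℝ (Matrix.toEuclideanLin Pᵀ x) x,
      ‖Matrix.toEuclideanLin (Utilᵀ * Q) (gradh ξ)‖ ≤ ε) :
    |h x - h (Matrix.toEuclideanLin Pᵀ x)| ≤
      Real.sqrt ⟪x - Matrix.toEuclideanLin Pᵀ x,
        Matrix.toEuclideanLin Q⁻¹ (x - Matrix.toEuclideanLin Pᵀ x)⟫ * ε := by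
  have hQsymm : Qᵀ = Q := by
    have := hQ.isHermitian.eq
    rwa [Matrix.conjTranspose_eq_transpose_of_trivial] at this
  have hkey : (U * Uᵀ + Util * Utilᵀ) * Q = 1 := outer_sum_eq_inv hdim Q hQ U hU Util hUtil horth
  have hQinv : Q⁻¹ = U * Uᵀ + Util * Utilᵀ := Matrix.inv_eq_left_inv hkey
  set y := Matrix.toEuclideanLin Pᵀ x with hy
  set d := x - y with hd
  -- Uᵀ * Pᵀ = Uᵀ
  have hdetT : IsUnit (Uᵀ * E).det := by
    have hEq : Uᵀ * E = (Eᵀ * U)ᵀ := by simp [Matrix.transpose_mul]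
    rw [hEq, Matrix.det_transpose]
    exact (Matrix.isUnit_iff_isUnit_det _).mp hinv
  have hUP : Uᵀ * Pᵀ = Uᵀ := by
    have hinvT : ((Eᵀ * U)⁻¹)ᵀ = (Uᵀ * E)⁻¹ := by
      rw [Matrix.transpose_nonsing_inv, Matrix.transpose_mul, Matrix.transpose_transpose]
    rw [hP, Matrix.transpose_mul, Matrix.transpose_mul, hinvT, Matrix.transpose_transpose]
    calc Uᵀ * (E * ((Uᵀ * E)⁻¹ * Uᵀ)) = (Uᵀ * E) * (Uᵀ * E)⁻¹ * Uᵀ := by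
          simp only [Matrix.mul_assoc]
      _ = Uᵀ := by rw [Matrix.mul_nonsing_inv _ hdetT, Matrix.one_mul]
  have hUd : Matrix.toEuclideanLin Uᵀ d = 0 := by
    have h1 : Matrix.toEuclideanLin Uᵀ y = Matrix.toEuclideanLin Uᵀ x := by
      rw [hy, ← tEL_mul, hUP]
    rw [hd, map_sub, h1, sub_self]
  set w := Matrix.toEuclideanLin Utilᵀ d with hw
  have hQd : Matrix.toEuclideanLin Q⁻¹ d = Matrix.toEuclideanLin Util w := by
    rw [hQinv, map_add, LinearMap.add_apply, tEL_mul, tEL_mul, hUd, map_zero, zero_add, hw]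
  have hsqrt : Real.sqrt ⟪d, Matrix.toEuclideanLin Q⁻¹ d⟫ = ‖w‖ := by
    have : ⟪d, Matrix.toEuclideanLin Q⁻¹ d⟫ = ⟪w, w⟫ := by
      rw [hQd]
      have h2 := tEL_adj Utilᵀ d w
      rw [Matrix.transpose_transpose] at h2
      exact h2.symm
    rw [this, real_inner_self_eq_norm_mul_norm, Real.sqrt_mul_self (norm_nonneg _)]
  have hQdetU : IsUnit Q.det := isUnit_iff_ne_zero.mpr hQ.det_pos.ne'
  have keyip : ∀ g : EuclideanSpace ℝ (Fin n),
      ⟪g, d⟫ = ⟪Matrix.toEuclideanLin (Utilᵀ * Q) g, w⟫ := by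
    intro g
    have h0 : d = Matrix.toEuclideanLin Q (Matrix.toEuclideanLin Q⁻¹ d) := by
      rw [← tEL_mul, Matrix.mul_nonsing_inv _ hQdetU, tEL_one]
    calc ⟪g, d⟫ = ⟪g, Matrix.toEuclideanLin (Q * Util) w⟫ := by
          rw [tEL_mul, ← hQd, ← h0]
      _ = ⟪Matrix.toEuclideanLin (Q * Util)ᵀ g, w⟫ := by
          rw [tEL_adj, Matrix.transpose_transpose]
      _ = ⟪Matrix.toEuclideanLin (Utilᵀ * Q) g, w⟫ := by
          rw [Matrix.transpose_mul, hQsymm]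
  -- the scalar function along the segment
  set L : ℝ → EuclideanSpace ℝ (Fin n) := fun t => y + t • d with hL
  have hLseg : ∀ t ∈ Set.Icc (0:ℝ) 1, L t ∈ segment ℝ y x := by
    intro t ht
    rw [segment_eq_image']
    exact ⟨t, ht, rfl⟩
  have hLd : ∀ t : ℝ, HasDerivAt L d t := by
    intro t
    have := ((hasDerivAt_id t).smul_const d).const_add y
    simpa [hL] using this
  have hphi : ∀ t ∈ Set.Icc (0:ℝ) 1,
      HasDerivWithinAt (h ∘ L) ⟪gradh (L t), d⟫ (Set.Icc (0:ℝ) 1) t := by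
    intro t ht
    have hg := (hdiff (L t) (hseg (hLseg t ht))).hasFDerivAt
    have hc := hg.comp_hasDerivAt t (hLd t)
    have : HasDerivAt (h ∘ L) ⟪gradh (L t), d⟫ t := by
      simpa [InnerProductSpace.toDual_apply_apply] using hc
    exact this.hasDerivWithinAt
  have hbound : ∀ t ∈ Set.Icc (0:ℝ) 1, ‖⟪gradh (L t), d⟫‖ ≤ ‖w‖ * ε := by
    intro t ht
    rw [keyip (gradh (L t))]
    calc ‖⟪Matrix.toEuclideanLin (Utilᵀ * Q) (gradh (L t)), w⟫‖
        ≤ ‖Matrix.toEuclideanLin (Utilᵀ * Q) (gradh (L t))‖ * ‖w‖ := norm_inner_le_norm _ _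
      _ ≤ ε * ‖w‖ := by
          apply mul_le_mul_of_nonneg_right _ (norm_nonneg _)
          exact hbd (L t) (hLseg t ht)
      _ = ‖w‖ * ε := mul_comm _ _
  have hmvt := Convex.norm_image_sub_le_of_norm_hasDerivWithin_le hphi hbound
    (convex_Icc (0:ℝ) 1) (Set.left_mem_Icc.mpr zero_le_one) (Set.right_mem_Icc.mpr zero_le_one)
  have hL1 : L 1 = x := by
    rw [hL]; simp [hd]
  have hL0 : L 0 = y := by
    rw [hL]; simp
  rw [hsqrt]
  calc |h x - h y| = ‖(h ∘ L) 1 - (h ∘ L) 0‖ := by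
        rw [Function.comp_apply, Function.comp_apply, hL1, hL0, Real.norm_eq_abs]
    _ ≤ ‖w‖ * ε * ‖(1:ℝ) - 0‖ := hmvt
    _ = ‖w‖ * ε := by norm_num
end
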